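/- Let p be a prime and α a positive integer not divisible by p. The sequence e ↦ (-1)^(p·α·e) · u((α·p^e)!) converges in the p-adic integers Z_p (equivalently, it is a Cauchy sequence for the p-adic metric). -/

import Mathlib

def unitPart (p n : ℕ) : ℕ := n / p ^ (padicValNat p n)

open Finset

section aux
variable {p : ℕ} [hp : Fact p.Prime]

lemma unitPart_eq_ord_compl (n : ℕ) : unitPart p n = n / p ^ n.factorization p := by
  rw [unitPart, Nat.factorization_def _ hp.out]

/-- product of non-multiples of p in [1, n] -/
def Qprod (p n : ℕ) : ℕ := ∏ k ∈ (Ico 1 (n+1)).filter (fun k => ¬ p ∣ k), k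

lemma not_dvd_Qprod (n : ℕ) : ¬ p ∣ Qprod p n := by
  rw [← hp.out.coprime_iff_not_dvd]
  exact Nat.Coprime.prod_right fun i hi =>
    (hp.out.coprime_iff_not_dvd).mpr (mem_filter.mp hi).2

lemma factorial_split (n : ℕ) :
    Nat.factorial (n * p) = p ^ n * Nat.factorial n * Qprod p (n * p) := by
  have h := (Finset.prod_filter_mul_prod_filter_not (Ico 1 (n*p+1)) (fun k => p ∣ k) id)
  simp only [id] at h
  have hmult : ∏ k ∈ (Ico 1 (n*p+1)).filter (fun k => p ∣ k), k
      = ∏ j ∈ Ico 1 (n+1), j * p := by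
    refine Finset.prod_nbij' (i := fun k => k / p) (j := fun k => k * p) ?_ ?_ ?_ ?_ ?_
    · intro a ha
      simp only [mem_filter, mem_Ico] at ha ⊢
      obtain ⟨⟨h1, h2⟩, hd⟩ := ha
      constructor
      · exact (Nat.one_le_div_iff hp.out.pos).mpr (Nat.le_of_dvd h1 hd)
      · have h3 : a / p ≤ n * p / p := Nat.div_le_div_right (Nat.lt_succ_iff.mp h2)
        rw [Nat.mul_div_cancel n hp.out.pos] at h3; omega
    · intro a ha
      simp only [mem_filter, mem_Ico, Nat.lt_succ_iff] at ha ⊢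
      exact ⟨⟨Nat.one_le_iff_ne_zero.mpr (Nat.mul_ne_zero (by omega) hp.out.ne_zero),
        Nat.mul_le_mul_right _ ha.2⟩, dvd_mul_left p a⟩
    · intro a ha
      exact Nat.div_mul_cancel (mem_filter.mp ha).2
    · intro a ha
      exact Nat.mul_div_cancel a hp.out.pos
    · intro a ha
      exact (Nat.div_mul_cancel (mem_filter.mp ha).2).symm
  rw [← Finset.prod_Ico_id_eq_factorial (n*p), ← h, hmult, Finset.prod_mul_distrib,
    Finset.prod_const, Nat.card_Ico, Nat.add_sub_cancel, Finset.prod_Ico_id_eq_factorial, Qprod]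
  ring

end aux
section aux2
variable {p : ℕ} [hp : Fact p.Prime]

lemma unitPart_factorial_mul (n : ℕ) :
    unitPart p (Nat.factorial (n * p))
      = unitPart p (Nat.factorial n) * Qprod p (n * p) := by
  rw [unitPart_eq_ord_compl, unitPart_eq_ord_compl, factorial_split n,
    Nat.ordCompl_mul, Nat.ordCompl_mul]
  have h1 : (p ^ n : ℕ) / p ^ (p^n).factorization p = 1 := by
    rw [hp.out.factorization_pow, Finsupp.single_eq_same, Nat.div_self (pow_pos hp.out.pos n)]
  have h2 : (Qprod p (n*p)) / p ^ (Qprod p (n*p)).factorization p = Qprod p (n*p) := by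
    rw [Nat.factorization_eq_zero_of_not_dvd (not_dvd_Qprod _), pow_zero, Nat.div_one]
  rw [h1, h2, one_mul]

end aux2
section zmod
variable {p : ℕ} [hp : Fact p.Prime] {m : ℕ} [NeZero m]

/-- product of all units of ZMod m, as ring element -/
noncomputable def Wval (m : ℕ) [NeZero m] : ZMod m := ↑(∏ x : (ZMod m)ˣ, x)

lemma Wunit_sq (m : ℕ) [NeZero m] : (∏ x : (ZMod m)ˣ, x) * (∏ x : (ZMod m)ˣ, x) = 1 := by
  classical
  have h2 : ∏ x : (ZMod m)ˣ, x⁻¹ = ∏ x : (ZMod m)ˣ, x :=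
    Fintype.prod_bijective (·⁻¹) (inv_involutive.bijective) _ _ (fun x => rfl)
  calc (∏ x : (ZMod m)ˣ, x) * (∏ x : (ZMod m)ˣ, x)
      = (∏ x : (ZMod m)ˣ, x) * (∏ x : (ZMod m)ˣ, x⁻¹) := by rw [h2]
    _ = ∏ x : (ZMod m)ˣ, (x * x⁻¹) := by rw [← Finset.prod_mul_distrib]
    _ = 1 := by simp

lemma Wval_sq (m : ℕ) [NeZero m] : Wval m * Wval m = 1 := by
  rw [Wval, ← Units.val_mul, Wunit_sq, Units.val_one]

def gfun (p m : ℕ) (k : ℕ) : ZMod m := if ¬ p ∣ k then (k : ZMod m) else 1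

lemma block_prod {e : ℕ} (he : e ≠ 0) (hm : m = p ^ e) (c : ℕ) :
    ∏ k ∈ Ico (c * m) ((c+1) * m), gfun p m k = Wval m := by
  classical
  have hpm : p ∣ m := hm ▸ dvd_pow_self p he
  have hco : ∀ k : ℕ, ¬ p ∣ k → k.Coprime m := by
    intro k hk
    rw [hm]
    exact Nat.Coprime.pow_right e ((hp.out.coprime_iff_not_dvd.mpr hk).symm)
  rw [show (∏ k ∈ Ico (c * m) ((c+1) * m), gfun p m k)
      = ∏ k ∈ (Ico (c * m) ((c+1) * m)).filter (fun k => ¬ p ∣ k), (k : ZMod m) from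
    (Finset.prod_filter _ _).symm]
  rw [Wval, Units.coe_prod]
  refine Finset.prod_bij'
    (i := fun k hk => ZMod.unitOfCoprime k (hco k (mem_filter.mp hk).2))
    (j := fun x _ => c * m + (x : ZMod m).val) ?_ ?_ ?_ ?_ ?_
  · intro a ha; exact mem_univ _
  · intro x _
    simp only [mem_filter, mem_Ico]
    have hv : ((x : ZMod m)).val < m := ZMod.val_lt _
    refine ⟨⟨Nat.le_add_right _ _, by rw [add_one_mul]; omega⟩, ?_⟩
    intro hd
    have hpv : p ∣ ((x : ZMod m)).val :=
      (Nat.dvd_add_right (Dvd.dvd.mul_left hpm c)).mp hd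
    have hcop : Nat.Coprime ((x : ZMod m)).val m := ZMod.val_coe_unit_coprime x
    have : p ∣ 1 := hcop ▸ Nat.dvd_gcd hpv hpm
    have h1 := Nat.le_of_dvd one_pos this
    have := hp.out.one_lt
    omega
  · intro a ha
    simp only [ZMod.coe_unitOfCoprime, ZMod.val_natCast]
    have hm := mem_filter.mp ha
    have h1 := (mem_Ico.mp hm.1).1
    have h2 := (mem_Ico.mp hm.1).2
    have hdiv : a / m = c := Nat.div_eq_of_lt_le h1 h2
    calc c * m + a % m = m * (a / m) + a % m := by rw [hdiv, mul_comm]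
      _ = a := Nat.div_add_mod a m
  · intro x _
    apply Units.ext
    push_cast [ZMod.coe_unitOfCoprime]
    simp [ZMod.natCast_self, ZMod.natCast_val, ZMod.cast_id]
  · intro a ha
    simp [ZMod.coe_unitOfCoprime]

end zmod
section zmod2
variable {p : ℕ} [hp : Fact p.Prime] {m : ℕ} [NeZero m]

lemma chain_prod {e : ℕ} (he : e ≠ 0) (hm : m = p ^ e) (N : ℕ) :
    ∏ k ∈ Ico 0 (N * m), gfun p m k = (Wval m) ^ N := by
  induction N with
  | zero => simp
  | succ N ih =>
    rw [← Finset.prod_Ico_consecutive (gfun p m) (Nat.zero_le (N * m))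
      (Nat.mul_le_mul_right m (Nat.le_succ N)), ih, block_prod he hm N, pow_succ]

lemma Qprod_cast {e : ℕ} (he : e ≠ 0) (hm : m = p ^ e) (N : ℕ) (hN : 0 < N) :
    ((Qprod p (N * m) : ℕ) : ZMod m) = (Wval m) ^ N := by
  have hm0 : 0 < m := Nat.pos_of_ne_zero (NeZero.ne m)
  have hpm : p ∣ m := hm ▸ dvd_pow_self p he
  have hX : 0 < N * m := Nat.mul_pos hN hm0
  rw [Qprod, Nat.cast_prod]
  rw [show (∏ k ∈ (Ico 1 (N*m+1)).filter (fun k => ¬ p ∣ k), (k : ZMod m))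
      = ∏ k ∈ Ico 1 (N*m+1), gfun p m k from Finset.prod_filter _ _]
  rw [Finset.prod_Ico_succ_top (by omega) (gfun p m)]
  have hgX : gfun p m (N * m) = 1 := by
    rw [gfun, if_neg]; push_neg; exact Dvd.dvd.mul_left hpm N
  rw [hgX, mul_one, ← chain_prod he hm N,
    Finset.prod_eq_prod_Ico_succ_bot hX (gfun p m)]
  have hg0 : gfun p m 0 = 1 := by
    rw [gfun, if_neg]; push_neg; exact dvd_zero p
  rw [hg0, one_mul]

lemma sq_eq_one_cases {e : ℕ} (he : e ≠ 0) (hm : m = p ^ e) (hodd : p ≠ 2)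
    (y : ZMod m) (hy : y * y = 1) : y = 1 ∨ y = -1 := by
  have hm0 : 0 < m := Nat.pos_of_ne_zero (NeZero.ne m)
  set a : ℤ := (y.val : ℤ) with ha
  have hya : ((a : ℤ) : ZMod m) = y := by
    rw [ha]; push_cast; rw [ZMod.natCast_val, ZMod.cast_id]
  have hdvd : (m : ℤ) ∣ (a - 1) * (a + 1) := by
    rw [← ZMod.intCast_zmod_eq_zero_iff_dvd]
    push_cast
    rw [hya]
    linear_combination hy
  have hp2 : ¬ ((p : ℤ) ∣ (a - 1) ∧ (p : ℤ) ∣ (a + 1)) := by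
    rintro ⟨h1, h2⟩
    have : (p : ℤ) ∣ 2 := by
      have := dvd_sub h2 h1
      simpa using this
    have hple : (p : ℤ) ≤ 2 := Int.le_of_dvd (by norm_num) this
    have h2 := hp.out.two_le
    have : p = 2 := by omega
    exact hodd this
  have hprime : Prime (p : ℤ) := Nat.prime_iff_prime_int.mp hp.out
  rw [hm] at hdvd
  push_cast at hdvd
  by_cases hd : (p : ℤ) ∣ (a - 1)
  · have hnd : ¬ (p : ℤ) ∣ (a + 1) := fun h => hp2 ⟨hd, h⟩
    have hcop : IsCoprime ((p : ℤ)^e) (a + 1) :=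
      (((hprime.coprime_iff_not_dvd).mpr hnd)).pow_left
    have : ((p : ℤ)^e) ∣ (a - 1) := hcop.dvd_of_dvd_mul_right hdvd
    left
    have : ((a - 1 : ℤ) : ZMod m) = 0 := by
      rw [ZMod.intCast_zmod_eq_zero_iff_dvd, hm]; push_cast; exact this
    push_cast at this
    rw [hya] at this
    linear_combination this
  · have hcop : IsCoprime ((p : ℤ)^e) (a - 1) :=
      (((hprime.coprime_iff_not_dvd).mpr hd)).pow_left
    have : ((p : ℤ)^e) ∣ (a + 1) := hcop.dvd_of_dvd_mul_left hdvd
    right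
    have : ((a + 1 : ℤ) : ZMod m) = 0 := by
      rw [ZMod.intCast_zmod_eq_zero_iff_dvd, hm]; push_cast; exact this
    push_cast at this
    rw [hya] at this
    linear_combination this

lemma Wunit_eq_neg_one {e : ℕ} (he : e ≠ 0) (hm : m = p ^ e) (hodd : p ≠ 2) :
    (∏ x : (ZMod m)ˣ, x) = -1 := by
  classical
  have hp3 : 3 ≤ p := by
    have h2 := hp.out.two_le
    omega
  have hm3 : 3 ≤ m := le_trans hp3 (hm ▸ Nat.le_self_pow he p)
  have hne : (-1 : (ZMod m)ˣ) ≠ 1 := by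
    intro h
    have hcoe : (-1 : ZMod m) = 1 := by
      have := congrArg Units.val h
      simpa using this
    have h2 : ((2:ℕ) : ZMod m) = 0 := by push_cast; linear_combination -hcoe
    rw [ZMod.natCast_eq_zero_iff] at h2
    have := Nat.le_of_dvd (by norm_num) h2
    omega
  have key : ∀ x : (ZMod m)ˣ, x⁻¹ = x → x = 1 ∨ x = -1 := by
    intro x hx
    have hxx : x * x = 1 := by
      nth_rewrite 2 [← hx]
      simp
    have hy : (x : ZMod m) * (x : ZMod m) = 1 := by
      have := congrArg Units.val hxx
      simpa using this
    rcases sq_eq_one_cases (p := p) he hm hodd (x : ZMod m) hy with h | h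
    · left; exact Units.ext (by simpa using h)
    · right; exact Units.ext (by simpa using h)
  have herase : ∏ x ∈ (univ : Finset (ZMod m)ˣ).erase (-1), x = 1 := by
    refine Finset.prod_involution (fun x _ => x⁻¹) (fun a _ => mul_inv_cancel a)
      (fun a ha hne1 => ?_) (fun a ha => ?_) (fun a ha => inv_inv a)
    · intro hinv
      rcases key a hinv with h | h
      · exact hne1 h
      · exact (Finset.ne_of_mem_erase ha) h
    · apply Finset.mem_erase.mpr
      refine ⟨?_, Finset.mem_univ _⟩
      intro h
      have : a = -1 := by
        have := congrArg (·⁻¹) h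
        simpa using this
      exact (Finset.ne_of_mem_erase ha) this
  rw [← Finset.insert_erase (Finset.mem_univ (-1 : (ZMod m)ˣ)),
    Finset.prod_insert (Finset.notMem_erase _ _), herase, mul_one]

lemma neg_one_mul_W {e : ℕ} (he : e ≠ 0) (hm : m = p ^ e) (t : ℕ) :
    ((-1 : ZMod m) * Wval m) ^ (p * t) = 1 := by
  by_cases hodd : p = 2
  · subst hodd
    rw [pow_mul, mul_pow]
    have h1 : (-1 : ZMod m) ^ 2 = 1 := by ring_nf
    have h2 : (Wval m) ^ 2 = 1 := by rw [pow_two]; exact Wval_sq m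
    rw [h1, h2, one_mul, one_pow]
  · have hW : Wval m = -1 := by
      rw [Wval, Wunit_eq_neg_one he hm hodd]
      simp
    rw [hW]
    norm_num

end zmod2

section main
variable {p : ℕ} [hp : Fact p.Prime]

lemma key_dvd (α : ℕ) (hα : 0 < α) (e : ℕ) :
    (p : ℤ) ^ e ∣ ((-1) ^ (p * α) * (Qprod p ((α * p ^ e) * p) : ℤ) - 1) := by
  rcases Nat.eq_zero_or_pos e with he | he
  · subst he; simpa using one_dvd _
  have hne : e ≠ 0 := by omega
  haveI : NeZero (p ^ e) := ⟨pow_ne_zero e hp.out.ne_zero⟩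
  rw [show ((p:ℤ)^e) = ((p^e : ℕ) : ℤ) by push_cast; ring]
  rw [← ZMod.intCast_zmod_eq_zero_iff_dvd]
  push_cast
  have harg : (α * p ^ e) * p = (α * p) * p ^ e := by ring
  rw [harg, Qprod_cast (m := p ^ e) hne rfl (α * p) (Nat.mul_pos hα hp.out.pos)]
  have : ((-1 : ZMod (p^e))) ^ (p * α) * (Wval (p^e)) ^ (α * p)
      = ((-1 : ZMod (p^e)) * Wval (p^e)) ^ (p * α) := by
    rw [mul_pow, mul_comm α p]
  rw [this, neg_one_mul_W hne rfl]
  ring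

lemma b_dvd (α : ℕ) (hα : 0 < α) (e : ℕ) :
    (p : ℤ) ^ e ∣
      ((-1) ^ (p * α * (e+1)) * (unitPart p (Nat.factorial (α * p ^ (e+1))) : ℤ)
        - (-1) ^ (p * α * e) * (unitPart p (Nat.factorial (α * p ^ e)) : ℤ)) := by
  have harg : α * p ^ (e+1) = (α * p ^ e) * p := by ring
  rw [harg, unitPart_factorial_mul (α * p ^ e)]
  have : ((-1 : ℤ)) ^ (p * α * (e+1)) *
        ((unitPart p (Nat.factorial (α * p ^ e)) * Qprod p ((α * p ^ e) * p) : ℕ) : ℤ)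
        - (-1) ^ (p * α * e) * (unitPart p (Nat.factorial (α * p ^ e)) : ℤ)
      = (-1) ^ (p * α * e) * (unitPart p (Nat.factorial (α * p ^ e)) : ℤ) *
        ((-1) ^ (p * α) * (Qprod p ((α * p ^ e) * p) : ℤ) - 1) := by
    push_cast
    rw [show p * α * (e+1) = p * α * e + p * α by ring, pow_add]
    ring
  rw [this]
  exact Dvd.dvd.mul_left (key_dvd α hα e) _

end main

theorem stmt4 (p : ℕ) [Fact p.Prime] (α : ℕ) (hα : 0 < α) (hpα : ¬ p ∣ α) :
    ∃ L : ℤ_[p], Filter.Tendsto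
      (fun e : ℕ => ((-1 : ℤ_[p]) ^ (p * α * e) *
        (unitPart p (Nat.factorial (α * p ^ e)) : ℤ_[p])))
      Filter.atTop (nhds L) := by
  set f : ℕ → ℤ_[p] := fun e => ((-1 : ℤ_[p]) ^ (p * α * e) *
    (unitPart p (Nat.factorial (α * p ^ e)) : ℤ_[p])) with hf
  have hcast : ∀ e, f e = (((-1 : ℤ) ^ (p * α * e) *
      (unitPart p (Nat.factorial (α * p ^ e)) : ℤ) : ℤ) : ℤ_[p]) := by
    intro e; rw [hf]; push_cast; ring
  apply cauchySeq_tendsto_of_complete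
  apply cauchySeq_of_le_geometric (r := (p : ℝ)⁻¹) (C := 1)
  · exact inv_lt_one_of_one_lt₀ (by exact_mod_cast (Fact.out : p.Prime).one_lt)
  · intro e
    rw [dist_eq_norm]
    have hdvd : (p : ℤ_[p]) ^ e ∣ (f e - f (e + 1)) := by
      rw [hcast, hcast]
      have h0 := (b_dvd (p := p) α hα e).neg_right
      have h2 := map_dvd (Int.castRingHom ℤ_[p]) h0
      simp only [eq_intCast] at h2
      push_cast at h2 ⊢
      convert h2 using 1
      ring
    have hnorm := (PadicInt.norm_le_pow_iff_mem_span_pow (f e - f (e+1)) e).mpr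
      (Ideal.mem_span_singleton.mpr hdvd)
    calc ‖f e - f (e+1)‖ ≤ (p : ℝ) ^ (-(e : ℤ)) := hnorm
      _ = 1 * ((p : ℝ)⁻¹) ^ e := by
          rw [one_mul, inv_pow, ← zpow_natCast, ← zpow_neg]
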